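/- For every integer N ≥ 2, one has the identity g_N(2) − g_N(3) = (2^(N-2)·(6·N + 5 + 27·(-1)^N) − 8·(-1)^N) / (9·2^N) in ℚ; moreover g_N(2) − g_N(3) ≥ 0, with equality if and only if N = 3. -/
import Mathlib

/-- The sequence `g_N(δ)` from the paper, as a rational number, for `N ≥ 1` and `δ ≥ 2`. -/
def g (N δ : ℕ) : ℚ :=
  (((N : ℚ) * δ + 1) * ((δ : ℚ) - 1) ^ (N - 1) + (-1) ^ N * ((δ : ℚ) + 1)) /
    ((δ : ℚ) ^ 2 * ((δ : ℚ) - 1) ^ (N - 1))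

lemma num_pos (m : ℕ) (hm : m ≠ 1) :
    0 < (2:ℚ) ^ m * (6 * ((m:ℚ) + 2) + 5 + 27 * (-1) ^ m) - 8 * (-1) ^ m := by
  rcases Nat.even_or_odd m with h | h
  · rw [h.neg_one_pow]
    have h1 : (1:ℚ) ≤ 2 ^ m := one_le_pow₀ (by norm_num)
    have hm0 : (0:ℚ) ≤ (m:ℚ) := by positivity
    have key : (1:ℚ) * (6 * ((m:ℚ) + 2) + 5 + 27) ≤ 2 ^ m * (6 * ((m:ℚ) + 2) + 5 + 27) :=
      mul_le_mul_of_nonneg_right h1 (by linarith)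
    linarith
  · rw [h.neg_one_pow]
    rcases eq_or_ne m 1 with rfl | hm1
    · exact absurd rfl hm
    · have hm3 : 3 ≤ m := by
        have := Nat.odd_iff.mp h; omega
      have h8 : (8:ℚ) ≤ 2 ^ m :=
        calc (8:ℚ) = 2 ^ 3 := by norm_num
        _ ≤ 2 ^ m := pow_le_pow_right₀ (by norm_num) hm3
      have hmq : (3:ℚ) ≤ (m:ℚ) := by exact_mod_cast hm3
      have hX : (8:ℚ) ≤ 6 * ((m:ℚ) + 2) + 5 + 27 * (-1) := by linarith
      have key : (8:ℚ) * 8 ≤ 2 ^ m * (6 * ((m:ℚ) + 2) + 5 + 27 * (-1)) :=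
        mul_le_mul h8 hX (by norm_num) (by positivity)
      linarith

/-- For `N ≥ 2`, `g_N(2) - g_N(3) = (2^(N-2) (6N + 5 + 27 (-1)^N) - 8 (-1)^N) / (9 · 2^N)`,
this difference is nonnegative, and it vanishes if and only if `N = 3`. -/
theorem g_two_sub_g_three (N : ℕ) (hN : 2 ≤ N) :
    g N 2 - g N 3 =
        ((2 : ℚ) ^ (N - 2) * (6 * (N : ℚ) + 5 + 27 * (-1) ^ N) - 8 * (-1) ^ N) / (9 * 2 ^ N) ∧
      0 ≤ g N 2 - g N 3 ∧ (g N 2 - g N 3 = 0 ↔ N = 3) := by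
  obtain ⟨m, rfl⟩ : ∃ m, N = m + 2 := ⟨N - 2, by omega⟩
  have heq : g (m + 2) 2 - g (m + 2) 3 =
      ((2 : ℚ) ^ ((m+2) - 2) * (6 * ((m+2 : ℕ) : ℚ) + 5 + 27 * (-1) ^ (m+2)) - 8 * (-1) ^ (m+2)) /
        (9 * 2 ^ (m+2)) := by
    simp only [g, Nat.add_sub_cancel, show m + 2 - 1 = m + 1 from rfl]
    push_cast
    norm_num [pow_succ]
    have h2 : (2 : ℚ) ^ m ≠ 0 := by positivity
    field_simp
    ring
  have hpow : (-1:ℚ) ^ (m + 2) = (-1:ℚ) ^ m := by rw [pow_add]; norm_num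
  have heq' : g (m + 2) 2 - g (m + 2) 3 =
      ((2:ℚ) ^ m * (6 * ((m:ℚ) + 2) + 5 + 27 * (-1) ^ m) - 8 * (-1) ^ m) / (9 * 2 ^ (m+2)) := by
    rw [heq, Nat.add_sub_cancel, hpow]; push_cast; ring_nf
  refine ⟨heq, ?_, ?_⟩
  · rw [heq']
    rcases eq_or_ne m 1 with rfl | hm1
    · norm_num
    · exact div_nonneg (num_pos m hm1).le (by positivity)
  · rw [heq', div_eq_zero_iff]
    constructor
    · rintro (h0 | h0)
      · by_contra hne
        have hm1 : m ≠ 1 := by omega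
        exact absurd h0 (num_pos m hm1).ne'
      · exact absurd h0 (by positivity)
    · rintro h
      have : m = 1 := by omega
      subst this
      norm_num
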